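/- Let F_i be a coordinate face of the weight polytope and η_i the least element of P_i in the dominance order. Then F_i is a facet (has dimension n−1) if and only if (η_i, ω̃_j) ≠ m_j for all j ≠ i, where ω̃_j are the fundamental coweights. -/

import Mathlib

open RealInnerProductSpace

noncomputable section

variable {E : Type*} [NormedAddCommGroup E] [InnerProductSpace ℝ E] [FiniteDimensional ℝ E]

/-- Reflection in the hyperplane orthogonal to `β`. -/
def sref (β : E) : E ≃ₗᵢ[ℝ] E := Submodule.reflection (ℝ ∙ β)ᗮ

/-- Data of a system of simple roots of a (crystallographic, irreducible) root system:
the simple roots form a basis of the euclidean space, Cartan integers are integral,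
distinct simple roots have nonpositive inner products, and the Dynkin diagram is connected. -/
structure RootData (n : ℕ) (E : Type*) [NormedAddCommGroup E] [InnerProductSpace ℝ E] where
  α : Fin n → E
  b : Module.Basis (Fin n) ℝ E
  hb : ∀ i, b i = α i
  cartan : ∀ i j, ∃ z : ℤ, (z : ℝ) * ⟪α j, α j⟫ = 2 * ⟪α i, α j⟫
  offdiag : ∀ i j : Fin n, i ≠ j → ⟪α i, α j⟫ ≤ 0
  conn : ∀ i j : Fin n, Relation.ReflTransGen (fun a b => a ≠ b ∧ ⟪α a, α b⟫ ≠ 0) i j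

namespace RootData

variable {n : ℕ} (S : RootData n E)

/-- The simple reflections. -/
def s (i : Fin n) : E ≃ₗᵢ[ℝ] E := sref (S.α i)

/-- The Weyl group, generated by the simple reflections. -/
def W : Subgroup (E ≃ₗᵢ[ℝ] E) := Subgroup.closure (Set.range S.s)

/-- The standard parabolic subgroup generated by the simple reflections indexed by `I`. -/
def WI (I : Set (Fin n)) : Subgroup (E ≃ₗᵢ[ℝ] E) := Subgroup.closure (S.s '' I)

/-- The set of roots:  the Weyl group orbit of the simple roots. -/
def roots : Set E := {β | ∃ w ∈ S.W, ∃ i, β = w (S.α i)}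

/-- `x` is dominant: nonnegative inner product with every simple root. -/
def Dominant (x : E) : Prop := ∀ i, 0 ≤ ⟪x, S.α i⟫

/-- The dominant weight `λ = Σ mᵢ αᵢ` (with nonnegative integer coefficients). -/
def lam (m : Fin n → ℕ) : E := ∑ j, (m j : ℝ) • S.α j

/-- `λ` is an integral weight: `2(λ,αᵢ)/(αᵢ,αᵢ)` is a (nonnegative) integer. -/
def IntegralDom (m : Fin n → ℕ) : Prop :=
  ∀ i, ∃ z : ℕ, (z : ℝ) * ⟪S.α i, S.α i⟫ = 2 * ⟪S.lam m, S.α i⟫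

/-- The Weyl group orbit of a point. -/
def orbit (x : E) : Set E := (fun w : E ≃ₗᵢ[ℝ] E => w x) '' (S.W : Set (E ≃ₗᵢ[ℝ] E))

/-- The weight polytope: the convex hull of the Weyl group orbit of `λ`. -/
def poly (m : Fin n → ℕ) : Set E := convexHull ℝ (S.orbit (S.lam m))

/-- `c μ i` is the coefficient of `αᵢ` when `μ` is expressed in the basis of simple roots. -/
def c (μ : E) (i : Fin n) : ℝ := S.b.repr μ i

/-- The set of weights `P(λ)`:  points of the weight polytope lying in the root lattice. -/
def Pw (m : Fin n → ℕ) : Set E := {μ ∈ S.poly m | ∀ i, ∃ z : ℤ, S.c μ i = z}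

/-- `P_I`: the weights whose `αᵢ`-coefficient equals `mᵢ` for all `i ∈ I`. -/
def P_ (m : Fin n → ℕ) (I : Set (Fin n)) : Set E :=
  {μ ∈ S.Pw m | ∀ i ∈ I, S.c μ i = m i}

/-- The standard parabolic face `F_I` of the weight polytope. -/
def F_ (m : Fin n → ℕ) (I : Set (Fin n)) : Set E :=
  {x ∈ S.poly m | ∀ i ∈ I, S.c x i = m i}

/-- The dominance order: `μ ≤ ν` iff `ν - μ` is a nonnegative integral sum of simple roots. -/
def wle (μ ν : E) : Prop := ∃ a : Fin n → ℕ, ν - μ = ∑ i, (a i : ℝ) • S.α i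

/-- Adjacency in the extended Dynkin diagram with extra node `-λ` (encoded as `none`). -/
def adj (m : Fin n → ℕ) : Option (Fin n) → Option (Fin n) → Prop
  | none, none => False
  | none, some j => 0 < ⟪S.lam m, S.α j⟫
  | some i, none => 0 < ⟪S.lam m, S.α i⟫
  | some i, some j => i ≠ j ∧ ⟪S.α i, S.α j⟫ ≠ 0

/-- One step in the extended Dynkin diagram, staying within the vertices `{-λ} ∪ {αₖ : k ∈ K}`. -/
def within (m : Fin n → ℕ) (K : Set (Fin n)) (a b : Option (Fin n)) : Prop :=
  S.adj m a b ∧ (∀ i, a = some i → i ∈ K) ∧ (∀ i, b = some i → i ∈ K)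

/-- `I̅⁰`: indices of the simple roots in the connected component of `-λ` in the subdiagram
of the extended Dynkin diagram on the complement of `I` together with `-λ`. -/
def comp0 (m : Fin n → ℕ) (I : Set (Fin n)) : Set (Fin n) :=
  {j | j ∉ I ∧ Relation.ReflTransGen (S.within m Iᶜ) none (some j)}

/-- The subdiagram of the extended Dynkin diagram on `{-λ} ∪ {αₖ : k ∈ K}` is connected. -/
def ConnWith (m : Fin n → ℕ) (K : Set (Fin n)) : Prop :=
  ∀ j ∈ K, Relation.ReflTransGen (S.within m K) none (some j)

/-- `ω` is the `i`-th fundamental coweight: `(ω, αⱼ) = δᵢⱼ`. -/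
def IsCoweight (i : Fin n) (ω : E) : Prop :=
  ∀ j, ⟪ω, S.α j⟫ = if j = i then 1 else 0

end RootData
set_option linter.unusedSectionVars false

namespace RootData

variable {n : ℕ} (S : RootData n E)

/-! ### Basic lemmas -/

theorem sref_apply (β x : E) : sref β x = x - (2 * ⟪β, x⟫ / ⟪β, β⟫) • β := by
  rw [sref, Submodule.reflection_orthogonal_apply, Submodule.reflection_singleton_apply]
  rw [real_inner_self_eq_norm_sq]
  simp only [RCLike.ofReal_real_eq_id, id_eq, two_smul]
  rw [div_eq_mul_inv, div_eq_mul_inv]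
  module

theorem alpha_ne_zero (i : Fin n) : S.α i ≠ 0 := by
  rw [← S.hb i]; exact S.b.ne_zero i

theorem inner_self_pos (i : Fin n) : 0 < ⟪S.α i, S.α i⟫ := by
  rw [real_inner_self_eq_norm_sq]
  exact pow_pos (norm_pos_iff.mpr (S.alpha_ne_zero i)) 2

theorem s_apply (i : Fin n) (x : E) :
    S.s i x = x - (2 * ⟪S.α i, x⟫ / ⟪S.α i, S.α i⟫) • S.α i := sref_apply _ _

theorem s_apply_of_inner_eq_zero (i : Fin n) (x : E) (h : ⟪S.α i, x⟫ = 0) :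
    S.s i x = x := by simp [S.s_apply, h]

theorem s_mul_s (i : Fin n) : S.s i * S.s i = 1 := Submodule.reflection_mul_reflection _

theorem s_inv (i : Fin n) : (S.s i)⁻¹ = S.s i :=
  inv_eq_of_mul_eq_one_left (S.s_mul_s i)

theorem s_mem_W (i : Fin n) : S.s i ∈ S.W :=
  Subgroup.subset_closure (Set.mem_range_self i)

theorem c_eq_coord (x : E) (k : Fin n) : S.c x k = S.b.coord k x := by
  rw [Module.Basis.coord_apply]; rfl

theorem c_add (x y : E) (k : Fin n) : S.c (x + y) k = S.c x k + S.c y k := by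
  simp [c_eq_coord]

theorem c_sub (x y : E) (k : Fin n) : S.c (x - y) k = S.c x k - S.c y k := by
  simp [c_eq_coord]

theorem c_smul (r : ℝ) (x : E) (k : Fin n) : S.c (r • x) k = r * S.c x k := by
  simp [c_eq_coord]

theorem c_zero (k : Fin n) : S.c 0 k = 0 := by simp [c_eq_coord]

theorem c_alpha (l k : Fin n) : S.c (S.α l) k = if l = k then 1 else 0 := by
  rw [← S.hb l, c, S.b.repr_self l, Finsupp.single_apply]

theorem c_sum_finset {ι : Type*} (t : Finset ι) (f : ι → E) (k : Fin n) :
    S.c (∑ a ∈ t, f a) k = ∑ a ∈ t, S.c (f a) k := by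
  simp [c_eq_coord]

theorem sum_c (x : E) : ∑ k, S.c x k • S.α k = x := by
  conv_rhs => rw [← S.b.sum_repr x]
  refine Finset.sum_congr rfl fun k _ => ?_
  rw [S.hb k]; rfl

theorem coweight_inner (j : Fin n) (ω : E) (hω : S.IsCoweight j ω) (x : E) :
    ⟪ω, x⟫ = S.c x j := by
  conv_lhs => rw [← S.sum_c x]
  rw [inner_sum]
  have hω' : ∀ k, ⟪ω, S.α k⟫ = if k = j then 1 else 0 := hω
  simp only [real_inner_smul_right, hω']
  rw [Finset.sum_congr rfl (fun k _ => by rw [mul_ite, mul_one, mul_zero])]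
  simp

theorem c_lam (m : Fin n → ℕ) (k : Fin n) : S.c (S.lam m) k = m k := by
  rw [lam, c_sum_finset]
  simp only [c_smul, c_alpha]
  simp

/-! ### Lattice -/

def IsLat (x : E) : Prop := ∀ k, ∃ z : ℤ, S.c x k = z

theorem isLat_alpha (l : Fin n) : S.IsLat (S.α l) := by
  intro k
  rw [c_alpha]
  exact ⟨if l = k then 1 else 0, by split <;> simp⟩

theorem isLat_lam (m : Fin n → ℕ) : S.IsLat (S.lam m) := by
  intro k; exact ⟨m k, by rw [c_lam]; simp⟩

theorem isLat_sub_zsmul {x y : E} (hx : S.IsLat x) (hy : S.IsLat y) (t : ℤ) :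
    S.IsLat (x - (t : ℝ) • y) := by
  intro k
  obtain ⟨a, ha⟩ := hx k; obtain ⟨b, hb'⟩ := hy k
  exact ⟨a - t * b, by rw [c_sub, c_smul, ha, hb']; push_cast; ring⟩

/-- Cartan integrality for lattice points : `⟨x, αˡ∨⟩ ∈ ℤ`. -/
theorem coroot_int {x : E} (hx : S.IsLat x) (l : Fin n) :
    ∃ t : ℤ, (t : ℝ) * ⟪S.α l, S.α l⟫ = 2 * ⟪x, S.α l⟫ := by
  choose z hz using hx
  choose zc hzc using S.cartan
  refine ⟨∑ k, z k * zc k l, ?_⟩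
  have : (2:ℝ) * ⟪x, S.α l⟫ = ∑ k, (z k : ℝ) * (2 * ⟪S.α k, S.α l⟫) := by
    conv_lhs => rw [← S.sum_c x]
    rw [sum_inner, Finset.mul_sum]
    refine Finset.sum_congr rfl fun k _ => ?_
    rw [real_inner_smul_left, hz k]; ring
  rw [this]
  push_cast
  rw [Finset.sum_mul]
  refine Finset.sum_congr rfl fun k _ => ?_
  rw [← hzc k l]; ring

/-- The reflection of a lattice point moves by an integer multiple of the root. -/
theorem s_apply_lat {x : E} (hx : S.IsLat x) (l : Fin n) :
    ∃ t : ℤ, S.s l x = x - (t : ℝ) • S.α l ∧ (t : ℝ) * ⟪S.α l, S.α l⟫ = 2 * ⟪x, S.α l⟫ := by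
  obtain ⟨t, ht⟩ := S.coroot_int hx l
  refine ⟨t, ?_, ht⟩
  rw [S.s_apply]
  congr 1
  rw [real_inner_comm, ← ht, mul_div_assoc,
    div_self (ne_of_gt (S.inner_self_pos l)), mul_one]

def latSub : Subgroup (E ≃ₗᵢ[ℝ] E) where
  carrier := {w | (∀ x, S.IsLat x → S.IsLat (w x)) ∧ ∀ x, S.IsLat x → S.IsLat (w⁻¹ x)}
  one_mem' := ⟨fun x hx => hx, fun x hx => hx⟩
  mul_mem' := by
    rintro a b ⟨ha1, ha2⟩ ⟨hb1, hb2⟩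
    refine ⟨fun x hx => ?_, fun x hx => ?_⟩
    · have : (a * b) x = a (b x) := rfl
      rw [this]; exact ha1 _ (hb1 _ hx)
    · have : (a * b)⁻¹ x = b⁻¹ (a⁻¹ x) := by
        rw [mul_inv_rev]; rfl
      rw [this]; exact hb2 _ (ha2 _ hx)
  inv_mem' := by
    rintro a ⟨ha1, ha2⟩
    exact ⟨ha2, by simpa using ha1⟩

theorem s_mem_latSub (l : Fin n) : S.s l ∈ S.latSub := by
  have key : ∀ x, S.IsLat x → S.IsLat (S.s l x) := by
    intro x hx
    obtain ⟨t, ht, -⟩ := S.s_apply_lat hx l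
    rw [ht]
    exact S.isLat_sub_zsmul hx (S.isLat_alpha l) t
  exact ⟨key, by rw [s_inv]; exact key⟩

theorem W_le_latSub : S.W ≤ S.latSub := by
  rw [W, Subgroup.closure_le]
  rintro w ⟨l, rfl⟩
  exact S.s_mem_latSub l

theorem isLat_smul {w : E ≃ₗᵢ[ℝ] E} (hw : w ∈ S.W) {x : E} (hx : S.IsLat x) :
    S.IsLat (w x) := (S.W_le_latSub hw).1 x hx

end RootData

namespace RootData

variable {n : ℕ} (S : RootData n E)

/-! ### Orbit and polytope -/

theorem lam_mem_orbit (m : Fin n → ℕ) : S.lam m ∈ S.orbit (S.lam m) :=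
  ⟨1, S.W.one_mem, rfl⟩

theorem smul_mem_orbit {w : E ≃ₗᵢ[ℝ] E} (hw : w ∈ S.W) {x y : E}
    (hx : x ∈ S.orbit y) : w x ∈ S.orbit y := by
  obtain ⟨u, hu, rfl⟩ := hx
  exact ⟨w * u, S.W.mul_mem hw hu, rfl⟩

theorem orbit_subset_poly (m : Fin n → ℕ) : S.orbit (S.lam m) ⊆ S.poly m :=
  subset_convexHull ℝ _

theorem lam_mem_poly (m : Fin n → ℕ) : S.lam m ∈ S.poly m :=
  S.orbit_subset_poly m (S.lam_mem_orbit m)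

theorem smul_mem_poly {w : E ≃ₗᵢ[ℝ] E} (hw : w ∈ S.W) {x : E} {m : Fin n → ℕ}
    (hx : x ∈ S.poly m) : w x ∈ S.poly m := by
  have hsub : S.poly m ⊆ w.toLinearEquiv.toLinearMap ⁻¹' S.poly m := by
    apply convexHull_min
    · intro y hy
      exact S.orbit_subset_poly m (S.smul_mem_orbit hw hy)
    · exact (convex_convexHull ℝ _).linear_preimage _
  exact hsub hx

theorem norm_of_mem_orbit {x y : E} (hx : x ∈ S.orbit y) : ‖x‖ = ‖y‖ := by
  obtain ⟨u, _, rfl⟩ := hx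
  exact u.norm_map y

theorem isLat_of_mem_orbit {x : E} {m : Fin n → ℕ} (hx : x ∈ S.orbit (S.lam m)) :
    S.IsLat x := by
  obtain ⟨u, hu, rfl⟩ := hx
  exact S.isLat_smul hu (S.isLat_lam m)

/-! ### Words and length -/

def wordProd (l : List (Fin n)) : E ≃ₗᵢ[ℝ] E := (l.map S.s).prod

@[simp] theorem wordProd_nil : S.wordProd [] = 1 := rfl

theorem wordProd_cons (a : Fin n) (l : List (Fin n)) :
    S.wordProd (a :: l) = S.s a * S.wordProd l := by
  simp [wordProd]

theorem wordProd_append (l l' : List (Fin n)) :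
    S.wordProd (l ++ l') = S.wordProd l * S.wordProd l' := by
  simp [wordProd]

theorem wordProd_singleton (a : Fin n) : S.wordProd [a] = S.s a := by
  simp [wordProd]

theorem wordProd_mem_W (l : List (Fin n)) : S.wordProd l ∈ S.W := by
  induction l with
  | nil => exact S.W.one_mem
  | cons a l ih => rw [wordProd_cons]; exact S.W.mul_mem (S.s_mem_W a) ih

theorem wordProd_reverse (l : List (Fin n)) :
    S.wordProd l.reverse = (S.wordProd l)⁻¹ := by
  induction l with
  | nil => simp
  | cons a l ih =>
    rw [List.reverse_cons, wordProd_append, ih, wordProd_singleton, wordProd_cons,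
      mul_inv_rev, s_inv]

theorem exists_word {w : E ≃ₗᵢ[ℝ] E} (hw : w ∈ S.W) : ∃ l, S.wordProd l = w := by
  induction hw using Subgroup.closure_induction with
  | mem u hu =>
    obtain ⟨a, rfl⟩ := hu
    exact ⟨[a], S.wordProd_singleton a⟩
  | one => exact ⟨[], rfl⟩
  | mul u v _ _ hu hv =>
    obtain ⟨lu, rfl⟩ := hu; obtain ⟨lv, rfl⟩ := hv
    exact ⟨lu ++ lv, S.wordProd_append lu lv⟩
  | inv u _ hu =>
    obtain ⟨lu, rfl⟩ := hu
    exact ⟨lu.reverse, S.wordProd_reverse lu⟩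

def ell (w : E ≃ₗᵢ[ℝ] E) : ℕ := sInf {k | ∃ l, l.length = k ∧ S.wordProd l = w}

theorem ell_spec {w : E ≃ₗᵢ[ℝ] E} (hw : w ∈ S.W) :
    ∃ l, l.length = S.ell w ∧ S.wordProd l = w := by
  have hne : {k | ∃ l : List (Fin n), l.length = k ∧ S.wordProd l = w}.Nonempty := by
    obtain ⟨l, hl⟩ := S.exists_word hw
    exact ⟨l.length, l, rfl, hl⟩
  exact Nat.sInf_mem hne

theorem ell_le {w : E ≃ₗᵢ[ℝ] E} {l : List (Fin n)} (h : S.wordProd l = w) :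
    S.ell w ≤ l.length := Nat.sInf_le ⟨l, rfl, h⟩

@[simp] theorem ell_one : S.ell 1 = 0 :=
  Nat.le_zero.mp (S.ell_le S.wordProd_nil)

theorem eq_one_of_ell_eq_zero {w : E ≃ₗᵢ[ℝ] E} (hw : w ∈ S.W) (h : S.ell w = 0) :
    w = 1 := by
  obtain ⟨l, hl, hp⟩ := S.ell_spec hw
  rw [h, List.length_eq_zero_iff] at hl
  rw [hl] at hp
  exact hp.symm.trans rfl

theorem ell_mul_s_le {w : E ≃ₗᵢ[ℝ] E} (hw : w ∈ S.W) (k : Fin n) :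
    S.ell (w * S.s k) ≤ S.ell w + 1 := by
  obtain ⟨l, hl, hp⟩ := S.ell_spec hw
  have : S.wordProd (l ++ [k]) = w * S.s k := by
    rw [wordProd_append, hp, wordProd_singleton]
  calc S.ell (w * S.s k) ≤ (l ++ [k]).length := S.ell_le this
  _ = S.ell w + 1 := by simp [hl]

theorem ell_le_mul_s {w : E ≃ₗᵢ[ℝ] E} (hw : w ∈ S.W) (k : Fin n) :
    S.ell w ≤ S.ell (w * S.s k) + 1 := by
  have h2 : (w * S.s k) * S.s k = w := by
    rw [mul_assoc, s_mul_s, mul_one]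
  have := S.ell_mul_s_le (S.W.mul_mem hw (S.s_mem_W k)) k
  rwa [h2] at this

theorem ell_le_mul_word {w : E ≃ₗᵢ[ℝ] E} (hw : w ∈ S.W) (l : List (Fin n)) :
    S.ell w ≤ S.ell (w * S.wordProd l) + l.length := by
  induction l generalizing w with
  | nil => simp
  | cons a l ih =>
    have h1 : w * S.wordProd (a :: l) = (w * S.s a) * S.wordProd l := by
      rw [wordProd_cons, mul_assoc]
    calc S.ell w ≤ S.ell (w * S.s a) + 1 := S.ell_le_mul_s hw a
    _ ≤ (S.ell ((w * S.s a) * S.wordProd l) + l.length) + 1 :=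
        Nat.add_le_add_right (ih (S.W.mul_mem hw (S.s_mem_W a))) 1
    _ = S.ell (w * S.wordProd (a :: l)) + (a :: l).length := by
        rw [h1]; simp; ring

/-! ### Determinant and parity -/

end RootData

def dmap (w : E ≃ₗᵢ[ℝ] E) : E →ₗ[ℝ] E := w.toLinearEquiv.toLinearMap

theorem dmap_mul (w w' : E ≃ₗᵢ[ℝ] E) : dmap (w * w') = (dmap w).comp (dmap w') := by
  ext x; rfl

namespace RootData

variable {n : ℕ} (S : RootData n E)

theorem det_s (i : Fin n) : LinearMap.det (dmap (S.s i)) = -1 := by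
  classical
  rw [← LinearMap.det_toMatrix S.b]
  have hmat : LinearMap.toMatrix S.b S.b (dmap (S.s i)) =
      1 + Matrix.replicateCol (Fin 1) (fun k => S.c (S.α i) k) *
        Matrix.replicateRow (Fin 1) (fun j => -(2 * ⟪S.α i, S.α j⟫ / ⟪S.α i, S.α i⟫)) := by
    ext k j
    rw [LinearMap.toMatrix_apply]
    have : dmap (S.s i) (S.b j) = S.α j - (2 * ⟪S.α i, S.α j⟫ / ⟪S.α i, S.α i⟫) • S.α i := by
      show S.s i (S.b j) = _
      rw [S.hb j, S.s_apply]
    rw [this]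
    show S.c (S.α j - (2 * ⟪S.α i, S.α j⟫ / ⟪S.α i, S.α i⟫) • S.α i) k = _
    rw [c_sub, c_smul, c_alpha, c_alpha]
    simp only [Matrix.add_apply, Matrix.mul_apply, Matrix.replicateCol_apply, Matrix.replicateRow_apply,
      Finset.univ_unique, Finset.sum_singleton, Matrix.one_apply]
    rw [c_alpha]
    by_cases h : j = k
    · subst h
      simp [eq_comm]
      ring
    · simp [h, Ne.symm h]
  rw [hmat]; erw [Matrix.det_one_add_replicateCol_mul_replicateRow (ι := Fin 1)]
  simp only [dotProduct]
  rw [Finset.sum_congr rfl (fun k _ => by rw [c_alpha, mul_ite, mul_one, mul_zero])]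
  rw [Finset.sum_ite_eq Finset.univ i (fun k => -(2 * ⟪S.α i, S.α k⟫ / ⟪S.α i, S.α i⟫))]
  simp only [Finset.mem_univ, if_true]
  rw [mul_div_assoc, div_self (ne_of_gt (S.inner_self_pos i))]
  norm_num

theorem det_wordProd (l : List (Fin n)) :
    LinearMap.det (dmap (S.wordProd l)) = (-1 : ℝ) ^ l.length := by
  induction l with
  | nil =>
    have h1 : dmap (1 : E ≃ₗᵢ[ℝ] E) = (LinearMap.id : E →ₗ[ℝ] E) := by ext x; rfl
    rw [wordProd_nil, h1]; simp
  | cons a l ih =>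
    rw [wordProd_cons, dmap_mul, LinearMap.det_comp, ih, S.det_s a]
    simp [pow_succ]
    try ring

theorem det_ell {w : E ≃ₗᵢ[ℝ] E} (hw : w ∈ S.W) :
    LinearMap.det (dmap w) = (-1 : ℝ) ^ S.ell w := by
  obtain ⟨l, hl, hp⟩ := S.ell_spec hw
  conv_lhs => rw [← hp]
  rw [det_wordProd, hl]

theorem ell_mul_s_ne {w : E ≃ₗᵢ[ℝ] E} (hw : w ∈ S.W) (k : Fin n) :
    S.ell (w * S.s k) ≠ S.ell w := by
  intro hEq
  have h1 : LinearMap.det (dmap (w * S.s k)) = (-1:ℝ) ^ S.ell (w * S.s k) :=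
    S.det_ell (S.W.mul_mem hw (S.s_mem_W k))
  rw [dmap_mul, LinearMap.det_comp, S.det_s k, S.det_ell hw, hEq] at h1
  have hne : ((-1:ℝ) ^ S.ell w) ≠ 0 := by
    apply pow_ne_zero; norm_num
  have h2 : ((-1:ℝ) ^ S.ell w) * (-1) = ((-1:ℝ) ^ S.ell w) * 1 := by
    rw [mul_one]; exact h1
  have h3 := mul_left_cancel₀ hne h2
  norm_num at h3

theorem ell_mul_s_cases {w : E ≃ₗᵢ[ℝ] E} (hw : w ∈ S.W) (k : Fin n) :
    S.ell (w * S.s k) = S.ell w + 1 ∨ S.ell (w * S.s k) + 1 = S.ell w := by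
  rcases lt_trichotomy (S.ell (w * S.s k)) (S.ell w) with h | h | h
  · right
    have := S.ell_le_mul_s hw k
    omega
  · exact absurd h (S.ell_mul_s_ne hw k)
  · left
    have := S.ell_mul_s_le hw k
    omega

end RootData

namespace RootData

variable {n : ℕ} (S : RootData n E)

/-! ### Alternating words and the dihedral computations -/

theorem wordProd_nil_apply (x : E) : S.wordProd [] x = x := rfl

theorem wordProd_cons_apply (a : Fin n) (l : List (Fin n)) (x : E) :
    S.wordProd (a :: l) x = S.s a (S.wordProd l x) := by
  rw [wordProd_cons]; rfl

theorem s_self (l : Fin n) : S.s l (S.α l) = -S.α l := by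
  rw [S.s_apply, mul_div_assoc, div_self (ne_of_gt (S.inner_self_pos l)), mul_one]
  module

theorem s_other {p q : Fin n} {A : ℝ} (h : A * ⟪S.α p, S.α p⟫ = 2 * ⟪S.α q, S.α p⟫) :
    S.s p (S.α q) = S.α q - A • S.α p := by
  have hc : 2 * ⟪S.α p, S.α q⟫ / ⟪S.α p, S.α p⟫ = A := by
    rw [real_inner_comm, ← h]
    exact mul_div_cancel_right₀ A (ne_of_gt (S.inner_self_pos p))
  rw [S.s_apply, hc]

theorem splane_fst {p q : Fin n} {A : ℝ} (h : A * ⟪S.α p, S.α p⟫ = 2 * ⟪S.α q, S.α p⟫)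
    (u v : ℝ) :
    S.s p (u • S.α p + v • S.α q) = (-u - A * v) • S.α p + v • S.α q := by
  rw [map_add, map_smul, map_smul, S.s_self p, S.s_other h]
  module

theorem splane_snd {p q : Fin n} {B : ℝ} (h : B * ⟪S.α q, S.α q⟫ = 2 * ⟪S.α p, S.α q⟫)
    (u v : ℝ) :
    S.s q (u • S.α p + v • S.α q) = u • S.α p + (-B * u - v) • S.α q := by
  rw [map_add, map_smul, map_smul, S.s_self q, S.s_other h]
  module

theorem splaneX_fst {p q : Fin n} {A : ℝ} (h : A * ⟪S.α p, S.α p⟫ = 2 * ⟪S.α q, S.α p⟫)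
    (x : E) (u v : ℝ) :
    S.s p (x + u • S.α p + v • S.α q) =
      x + (-u - A * v - 2 * ⟪S.α p, x⟫ / ⟪S.α p, S.α p⟫) • S.α p + v • S.α q := by
  rw [map_add, map_add, map_smul, map_smul, S.s_self p, S.s_other h, S.s_apply p x]
  module

theorem splaneX_snd {p q : Fin n} {B : ℝ} (h : B * ⟪S.α q, S.α q⟫ = 2 * ⟪S.α p, S.α q⟫)
    (x : E) (u v : ℝ) :
    S.s q (x + u • S.α p + v • S.α q) =
      x + u • S.α p + (-B * u - v - 2 * ⟪S.α q, x⟫ / ⟪S.α q, S.α q⟫) • S.α q := by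
  rw [map_add, map_add, map_smul, map_smul, S.s_self q, S.s_other h, S.s_apply q x]
  module

end RootData

def altW {n : ℕ} (a b : Fin n) : ℕ → List (Fin n)
  | 0 => []
  | (t+1) => a :: altW b a t

@[simp] theorem altW_length {n : ℕ} (a b : Fin n) (t : ℕ) : (altW a b t).length = t := by
  induction t generalizing a b with
  | zero => rfl
  | succ t ih => simp [altW, ih]

theorem altW_append {n : ℕ} (a b : Fin n) (t : ℕ) :
    altW a b (t+1) = altW a b t ++ [if t % 2 = 0 then a else b] := by
  induction t generalizing a b with
  | zero => rfl
  | succ t ih =>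
    show a :: altW b a (t+1) = (a :: altW b a t) ++ _
    rw [ih b a]
    by_cases h : t % 2 = 0
    · have h2 : (t+1) % 2 ≠ 0 := by omega
      simp [h, h2]
    · have h2 : (t+1) % 2 = 0 := by omega
      simp [h, h2]

namespace RootData

variable {n : ℕ} (S : RootData n E)

/-- The key dihedral lemma: braid relation and rank-two positivity. -/
theorem dihedral (p q : Fin n) (hpq : p ≠ q) :
    ∃ m : ℕ, 2 ≤ m ∧ S.wordProd (altW q p m) = S.wordProd (altW p q m) ∧
      ∀ t, t < m → ∃ cf : ℝ × ℝ, 0 ≤ cf.1 ∧ 0 ≤ cf.2 ∧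
        S.wordProd (altW q p t).reverse (S.α p) = cf.1 • S.α p + cf.2 • S.α q := by
  obtain ⟨za, hza⟩ := S.cartan q p
  obtain ⟨zb, hzb⟩ := S.cartan p q
  have hNp := S.inner_self_pos p
  have hNq := S.inner_self_pos q
  have hqp : ⟪S.α q, S.α p⟫ ≤ 0 := S.offdiag q p (Ne.symm hpq)
  have hpq2 : ⟪S.α p, S.α q⟫ ≤ 0 := S.offdiag p q hpq
  have haz : za ≤ 0 := by
    have : (za:ℝ) ≤ 0 := by nlinarith
    exact_mod_cast this
  have hbz : zb ≤ 0 := by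
    have : (zb:ℝ) ≤ 0 := by nlinarith
    exact_mod_cast this
  have hy : S.α q - (⟪S.α p, S.α q⟫ / ⟪S.α p, S.α p⟫) • S.α p ≠ 0 := by
    intro h
    have h2 := congrArg (fun y => S.c y q) h
    simp [c_sub, c_smul, c_alpha, c_zero, hpq] at h2
  have hyy : 0 < ⟪S.α p, S.α p⟫ * ⟪S.α q, S.α q⟫ - ⟪S.α p, S.α q⟫ ^ 2 := by
    have h1 : 0 < ‖S.α q - (⟪S.α p, S.α q⟫ / ⟪S.α p, S.α p⟫) • S.α p‖ ^ 2 :=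
      pow_pos (norm_pos_iff.mpr hy) 2
    rw [← real_inner_self_eq_norm_sq] at h1
    have h2 : ⟪S.α q - (⟪S.α p, S.α q⟫ / ⟪S.α p, S.α p⟫) • S.α p,
        S.α q - (⟪S.α p, S.α q⟫ / ⟪S.α p, S.α p⟫) • S.α p⟫
        = ⟪S.α q, S.α q⟫ - ⟪S.α p, S.α q⟫ ^ 2 / ⟪S.α p, S.α p⟫ := by
      have hNp' : ⟪S.α p, S.α p⟫ ≠ 0 := ne_of_gt hNp
      simp only [inner_sub_left, inner_sub_right, real_inner_smul_left, real_inner_smul_right]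
      rw [real_inner_comm (S.α q) (S.α p)]
      field_simp
      ring
    rw [h2] at h1
    have h3 : 0 < (⟪S.α q, S.α q⟫ - ⟪S.α p, S.α q⟫ ^ 2 / ⟪S.α p, S.α p⟫) * ⟪S.α p, S.α p⟫ :=
      mul_pos h1 hNp
    have h4 : (⟪S.α q, S.α q⟫ - ⟪S.α p, S.α q⟫ ^ 2 / ⟪S.α p, S.α p⟫) * ⟪S.α p, S.α p⟫
        = ⟪S.α p, S.α p⟫ * ⟪S.α q, S.α q⟫ - ⟪S.α p, S.α q⟫ ^ 2 := by
      field_simp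
    rw [h4] at h3
    exact h3
  have hprod : ((za * zb : ℤ) : ℝ) * (⟪S.α p, S.α p⟫ * ⟪S.α q, S.α q⟫)
      = 4 * ⟪S.α p, S.α q⟫ ^ 2 := by
    have e1 : (za:ℝ) * ⟪S.α p, S.α p⟫ * ((zb:ℝ) * ⟪S.α q, S.α q⟫)
        = 2 * ⟪S.α q, S.α p⟫ * (2 * ⟪S.α p, S.α q⟫) := by rw [hza, hzb]
    have e2 : ⟪S.α q, S.α p⟫ = ⟪S.α p, S.α q⟫ := real_inner_comm _ _
    rw [e2] at e1
    push_cast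
    nlinarith [e1]
  have hz3 : za * zb ≤ 3 := by
    have hPQ : 0 < ⟪S.α p, S.α p⟫ * ⟪S.α q, S.α q⟫ := mul_pos hNp hNq
    have h5 : ((za * zb : ℤ) : ℝ) * (⟪S.α p, S.α p⟫ * ⟪S.α q, S.α q⟫)
        < 4 * (⟪S.α p, S.α p⟫ * ⟪S.α q, S.α q⟫) := by
      rw [hprod]; nlinarith [hyy]
    have h4 : ((za * zb : ℤ) : ℝ) < 4 := (mul_lt_mul_iff_left₀ hPQ).mp h5
    have h6 : (za * zb : ℤ) < 4 := by exact_mod_cast h4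
    omega
  have hz0 : 0 ≤ za * zb := by nlinarith
  have hzab : za = 0 → zb = 0 := by
    intro h
    subst h
    have h5 : (0:ℝ) * ⟪S.α p, S.α p⟫ = 2 * ⟪S.α q, S.α p⟫ := by exact_mod_cast hza
    have h0' : ⟪S.α p, S.α q⟫ = 0 := by
      rw [real_inner_comm]; linarith
    have h6 : (zb:ℝ) * ⟪S.α q, S.α q⟫ = 0 := by rw [hzb, h0']; ring
    have h7 : (zb:ℝ) = 0 := by
      rcases mul_eq_zero.mp h6 with h | h
      · exact h
      · exact absurd h (ne_of_gt hNq)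
    exact_mod_cast h7
  have hzba : zb = 0 → za = 0 := by
    intro h
    subst h
    have h5 : (0:ℝ) * ⟪S.α q, S.α q⟫ = 2 * ⟪S.α p, S.α q⟫ := by exact_mod_cast hzb
    have h0' : ⟪S.α q, S.α p⟫ = 0 := by
      rw [real_inner_comm]; linarith
    have h6 : (za:ℝ) * ⟪S.α p, S.α p⟫ = 0 := by rw [hza, h0']; ring
    have h7 : (za:ℝ) = 0 := by
      rcases mul_eq_zero.mp h6 with h | h
      · exact h
      · exact absurd h (ne_of_gt hNp)
    exact_mod_cast h7
  have key : (za = 0 ∧ zb = 0) ∨ (za = -1 ∧ zb = -1) ∨ (za = -1 ∧ zb = -2) ∨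
      (za = -2 ∧ zb = -1) ∨ (za = -1 ∧ zb = -3) ∨ (za = -3 ∧ zb = -1) := by
    rcases eq_or_lt_of_le haz with h0 | hlt
    · exact Or.inl ⟨h0, hzab h0⟩
    · have ha1 : za ≤ -1 := by omega
      have hb1 : zb ≤ -1 := by
        rcases eq_or_lt_of_le hbz with h0 | h
        · exact absurd (hzba h0) (by omega)
        · omega
      have hal : -3 ≤ za := by nlinarith
      have hbl : -3 ≤ zb := by nlinarith
      interval_cases za <;> interval_cases zb <;> omega
  rcases key with hcase | hcase | hcase | hcase | hcase | hcase
  · -- case za = 0, zb = 0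
    have hA : ((0:ℝ)) * ⟪S.α p, S.α p⟫ = 2 * ⟪S.α q, S.α p⟫ := by
      rw [← hza, hcase.1]; push_cast; ring
    have hB : ((0:ℝ)) * ⟪S.α q, S.α q⟫ = 2 * ⟪S.α p, S.α q⟫ := by
      rw [← hzb, hcase.2]; push_cast; ring
    refine ⟨2, by norm_num, ?_, ?_⟩
    · refine LinearIsometryEquiv.ext fun x => ?_
      rw [show altW q p 2 = [q, p] from rfl,
        show altW p q 2 = [p, q] from rfl]
      simp only [wordProd_cons_apply, wordProd_nil_apply]
      rw [show x = x + (0:ℝ) • S.α p + (0:ℝ) • S.α q by module]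
      rw [splaneX_fst S hA,
          splaneX_snd S hB,
          splaneX_snd S hB,
          splaneX_fst S hA]
      match_scalars <;> ring
    · intro t ht
      interval_cases t
      · refine ⟨(1, 0), by norm_num, by norm_num, ?_⟩
        rw [show (altW q p 0).reverse = ([] : List (Fin n)) from rfl, wordProd_nil_apply]
        module
      · refine ⟨(1, 0), by norm_num, by norm_num, ?_⟩
        rw [show (altW q p 1).reverse = ([q] : List (Fin n)) from rfl]
        simp only [wordProd_cons_apply, wordProd_nil_apply]
        conv_lhs => rw [show S.α p = (1:ℝ) • S.α p + (0:ℝ) • S.α q by module]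
        rw [splane_snd S hB]
        match_scalars <;> norm_num
  · -- case za = -1, zb = -1
    have hA : ((-1:ℝ)) * ⟪S.α p, S.α p⟫ = 2 * ⟪S.α q, S.α p⟫ := by
      rw [← hza, hcase.1]; push_cast; ring
    have hB : ((-1:ℝ)) * ⟪S.α q, S.α q⟫ = 2 * ⟪S.α p, S.α q⟫ := by
      rw [← hzb, hcase.2]; push_cast; ring
    refine ⟨3, by norm_num, ?_, ?_⟩
    · refine LinearIsometryEquiv.ext fun x => ?_
      rw [show altW q p 3 = [q, p, q] from rfl,
        show altW p q 3 = [p, q, p] from rfl]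
      simp only [wordProd_cons_apply, wordProd_nil_apply]
      rw [show x = x + (0:ℝ) • S.α p + (0:ℝ) • S.α q by module]
      rw [splaneX_snd S hB,
          splaneX_fst S hA,
          splaneX_snd S hB,
          splaneX_fst S hA,
          splaneX_snd S hB,
          splaneX_fst S hA]
      match_scalars <;> ring
    · intro t ht
      interval_cases t
      · refine ⟨(1, 0), by norm_num, by norm_num, ?_⟩
        rw [show (altW q p 0).reverse = ([] : List (Fin n)) from rfl, wordProd_nil_apply]
        module
      · refine ⟨(1, 1), by norm_num, by norm_num, ?_⟩
        rw [show (altW q p 1).reverse = ([q] : List (Fin n)) from rfl]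
        simp only [wordProd_cons_apply, wordProd_nil_apply]
        conv_lhs => rw [show S.α p = (1:ℝ) • S.α p + (0:ℝ) • S.α q by module]
        rw [splane_snd S hB]
        match_scalars <;> norm_num
      · refine ⟨(0, 1), by norm_num, by norm_num, ?_⟩
        rw [show (altW q p 2).reverse = ([p, q] : List (Fin n)) from rfl]
        simp only [wordProd_cons_apply, wordProd_nil_apply]
        conv_lhs => rw [show S.α p = (1:ℝ) • S.α p + (0:ℝ) • S.α q by module]
        rw [splane_snd S hB, splane_fst S hA]
        match_scalars <;> norm_num
  · -- case za = -1, zb = -2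
    have hA : ((-1:ℝ)) * ⟪S.α p, S.α p⟫ = 2 * ⟪S.α q, S.α p⟫ := by
      rw [← hza, hcase.1]; push_cast; ring
    have hB : ((-2:ℝ)) * ⟪S.α q, S.α q⟫ = 2 * ⟪S.α p, S.α q⟫ := by
      rw [← hzb, hcase.2]; push_cast; ring
    refine ⟨4, by norm_num, ?_, ?_⟩
    · refine LinearIsometryEquiv.ext fun x => ?_
      rw [show altW q p 4 = [q, p, q, p] from rfl,
        show altW p q 4 = [p, q, p, q] from rfl]
      simp only [wordProd_cons_apply, wordProd_nil_apply]
      rw [show x = x + (0:ℝ) • S.α p + (0:ℝ) • S.α q by module]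
      rw [splaneX_fst S hA,
          splaneX_snd S hB,
          splaneX_fst S hA,
          splaneX_snd S hB,
          splaneX_snd S hB,
          splaneX_fst S hA,
          splaneX_snd S hB,
          splaneX_fst S hA]
      match_scalars <;> ring
    · intro t ht
      interval_cases t
      · refine ⟨(1, 0), by norm_num, by norm_num, ?_⟩
        rw [show (altW q p 0).reverse = ([] : List (Fin n)) from rfl, wordProd_nil_apply]
        module
      · refine ⟨(1, 2), by norm_num, by norm_num, ?_⟩
        rw [show (altW q p 1).reverse = ([q] : List (Fin n)) from rfl]
        simp only [wordProd_cons_apply, wordProd_nil_apply]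
        conv_lhs => rw [show S.α p = (1:ℝ) • S.α p + (0:ℝ) • S.α q by module]
        rw [splane_snd S hB]
        match_scalars <;> norm_num
      · refine ⟨(1, 2), by norm_num, by norm_num, ?_⟩
        rw [show (altW q p 2).reverse = ([p, q] : List (Fin n)) from rfl]
        simp only [wordProd_cons_apply, wordProd_nil_apply]
        conv_lhs => rw [show S.α p = (1:ℝ) • S.α p + (0:ℝ) • S.α q by module]
        rw [splane_snd S hB, splane_fst S hA]
        match_scalars <;> norm_num
      · refine ⟨(1, 0), by norm_num, by norm_num, ?_⟩
        rw [show (altW q p 3).reverse = ([q, p, q] : List (Fin n)) from rfl]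
        simp only [wordProd_cons_apply, wordProd_nil_apply]
        conv_lhs => rw [show S.α p = (1:ℝ) • S.α p + (0:ℝ) • S.α q by module]
        rw [splane_snd S hB, splane_fst S hA, splane_snd S hB]
        match_scalars <;> norm_num
  · -- case za = -2, zb = -1
    have hA : ((-2:ℝ)) * ⟪S.α p, S.α p⟫ = 2 * ⟪S.α q, S.α p⟫ := by
      rw [← hza, hcase.1]; push_cast; ring
    have hB : ((-1:ℝ)) * ⟪S.α q, S.α q⟫ = 2 * ⟪S.α p, S.α q⟫ := by
      rw [← hzb, hcase.2]; push_cast; ring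
    refine ⟨4, by norm_num, ?_, ?_⟩
    · refine LinearIsometryEquiv.ext fun x => ?_
      rw [show altW q p 4 = [q, p, q, p] from rfl,
        show altW p q 4 = [p, q, p, q] from rfl]
      simp only [wordProd_cons_apply, wordProd_nil_apply]
      rw [show x = x + (0:ℝ) • S.α p + (0:ℝ) • S.α q by module]
      rw [splaneX_fst S hA,
          splaneX_snd S hB,
          splaneX_fst S hA,
          splaneX_snd S hB,
          splaneX_snd S hB,
          splaneX_fst S hA,
          splaneX_snd S hB,
          splaneX_fst S hA]
      match_scalars <;> ring
    · intro t ht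
      interval_cases t
      · refine ⟨(1, 0), by norm_num, by norm_num, ?_⟩
        rw [show (altW q p 0).reverse = ([] : List (Fin n)) from rfl, wordProd_nil_apply]
        module
      · refine ⟨(1, 1), by norm_num, by norm_num, ?_⟩
        rw [show (altW q p 1).reverse = ([q] : List (Fin n)) from rfl]
        simp only [wordProd_cons_apply, wordProd_nil_apply]
        conv_lhs => rw [show S.α p = (1:ℝ) • S.α p + (0:ℝ) • S.α q by module]
        rw [splane_snd S hB]
        match_scalars <;> norm_num
      · refine ⟨(1, 1), by norm_num, by norm_num, ?_⟩
        rw [show (altW q p 2).reverse = ([p, q] : List (Fin n)) from rfl]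
        simp only [wordProd_cons_apply, wordProd_nil_apply]
        conv_lhs => rw [show S.α p = (1:ℝ) • S.α p + (0:ℝ) • S.α q by module]
        rw [splane_snd S hB, splane_fst S hA]
        match_scalars <;> norm_num
      · refine ⟨(1, 0), by norm_num, by norm_num, ?_⟩
        rw [show (altW q p 3).reverse = ([q, p, q] : List (Fin n)) from rfl]
        simp only [wordProd_cons_apply, wordProd_nil_apply]
        conv_lhs => rw [show S.α p = (1:ℝ) • S.α p + (0:ℝ) • S.α q by module]
        rw [splane_snd S hB, splane_fst S hA, splane_snd S hB]
        match_scalars <;> norm_num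
  · -- case za = -1, zb = -3
    have hA : ((-1:ℝ)) * ⟪S.α p, S.α p⟫ = 2 * ⟪S.α q, S.α p⟫ := by
      rw [← hza, hcase.1]; push_cast; ring
    have hB : ((-3:ℝ)) * ⟪S.α q, S.α q⟫ = 2 * ⟪S.α p, S.α q⟫ := by
      rw [← hzb, hcase.2]; push_cast; ring
    refine ⟨6, by norm_num, ?_, ?_⟩
    · refine LinearIsometryEquiv.ext fun x => ?_
      rw [show altW q p 6 = [q, p, q, p, q, p] from rfl,
        show altW p q 6 = [p, q, p, q, p, q] from rfl]
      simp only [wordProd_cons_apply, wordProd_nil_apply]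
      rw [show x = x + (0:ℝ) • S.α p + (0:ℝ) • S.α q by module]
      rw [splaneX_fst S hA,
          splaneX_snd S hB,
          splaneX_fst S hA,
          splaneX_snd S hB,
          splaneX_fst S hA,
          splaneX_snd S hB,
          splaneX_snd S hB,
          splaneX_fst S hA,
          splaneX_snd S hB,
          splaneX_fst S hA,
          splaneX_snd S hB,
          splaneX_fst S hA]
      match_scalars <;> ring
    · intro t ht
      interval_cases t
      · refine ⟨(1, 0), by norm_num, by norm_num, ?_⟩
        rw [show (altW q p 0).reverse = ([] : List (Fin n)) from rfl, wordProd_nil_apply]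
        module
      · refine ⟨(1, 3), by norm_num, by norm_num, ?_⟩
        rw [show (altW q p 1).reverse = ([q] : List (Fin n)) from rfl]
        simp only [wordProd_cons_apply, wordProd_nil_apply]
        conv_lhs => rw [show S.α p = (1:ℝ) • S.α p + (0:ℝ) • S.α q by module]
        rw [splane_snd S hB]
        match_scalars <;> norm_num
      · refine ⟨(2, 3), by norm_num, by norm_num, ?_⟩
        rw [show (altW q p 2).reverse = ([p, q] : List (Fin n)) from rfl]
        simp only [wordProd_cons_apply, wordProd_nil_apply]
        conv_lhs => rw [show S.α p = (1:ℝ) • S.α p + (0:ℝ) • S.α q by module]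
        rw [splane_snd S hB, splane_fst S hA]
        match_scalars <;> norm_num
      · refine ⟨(2, 3), by norm_num, by norm_num, ?_⟩
        rw [show (altW q p 3).reverse = ([q, p, q] : List (Fin n)) from rfl]
        simp only [wordProd_cons_apply, wordProd_nil_apply]
        conv_lhs => rw [show S.α p = (1:ℝ) • S.α p + (0:ℝ) • S.α q by module]
        rw [splane_snd S hB, splane_fst S hA, splane_snd S hB]
        match_scalars <;> norm_num
      · refine ⟨(1, 3), by norm_num, by norm_num, ?_⟩
        rw [show (altW q p 4).reverse = ([p, q, p, q] : List (Fin n)) from rfl]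
        simp only [wordProd_cons_apply, wordProd_nil_apply]
        conv_lhs => rw [show S.α p = (1:ℝ) • S.α p + (0:ℝ) • S.α q by module]
        rw [splane_snd S hB, splane_fst S hA, splane_snd S hB, splane_fst S hA]
        match_scalars <;> norm_num
      · refine ⟨(1, 0), by norm_num, by norm_num, ?_⟩
        rw [show (altW q p 5).reverse = ([q, p, q, p, q] : List (Fin n)) from rfl]
        simp only [wordProd_cons_apply, wordProd_nil_apply]
        conv_lhs => rw [show S.α p = (1:ℝ) • S.α p + (0:ℝ) • S.α q by module]
        rw [splane_snd S hB, splane_fst S hA, splane_snd S hB, splane_fst S hA, splane_snd S hB]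
        match_scalars <;> norm_num
  · -- case za = -3, zb = -1
    have hA : ((-3:ℝ)) * ⟪S.α p, S.α p⟫ = 2 * ⟪S.α q, S.α p⟫ := by
      rw [← hza, hcase.1]; push_cast; ring
    have hB : ((-1:ℝ)) * ⟪S.α q, S.α q⟫ = 2 * ⟪S.α p, S.α q⟫ := by
      rw [← hzb, hcase.2]; push_cast; ring
    refine ⟨6, by norm_num, ?_, ?_⟩
    · refine LinearIsometryEquiv.ext fun x => ?_
      rw [show altW q p 6 = [q, p, q, p, q, p] from rfl,
        show altW p q 6 = [p, q, p, q, p, q] from rfl]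
      simp only [wordProd_cons_apply, wordProd_nil_apply]
      rw [show x = x + (0:ℝ) • S.α p + (0:ℝ) • S.α q by module]
      rw [splaneX_fst S hA,
          splaneX_snd S hB,
          splaneX_fst S hA,
          splaneX_snd S hB,
          splaneX_fst S hA,
          splaneX_snd S hB,
          splaneX_snd S hB,
          splaneX_fst S hA,
          splaneX_snd S hB,
          splaneX_fst S hA,
          splaneX_snd S hB,
          splaneX_fst S hA]
      match_scalars <;> ring
    · intro t ht
      interval_cases t
      · refine ⟨(1, 0), by norm_num, by norm_num, ?_⟩
        rw [show (altW q p 0).reverse = ([] : List (Fin n)) from rfl, wordProd_nil_apply]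
        module
      · refine ⟨(1, 1), by norm_num, by norm_num, ?_⟩
        rw [show (altW q p 1).reverse = ([q] : List (Fin n)) from rfl]
        simp only [wordProd_cons_apply, wordProd_nil_apply]
        conv_lhs => rw [show S.α p = (1:ℝ) • S.α p + (0:ℝ) • S.α q by module]
        rw [splane_snd S hB]
        match_scalars <;> norm_num
      · refine ⟨(2, 1), by norm_num, by norm_num, ?_⟩
        rw [show (altW q p 2).reverse = ([p, q] : List (Fin n)) from rfl]
        simp only [wordProd_cons_apply, wordProd_nil_apply]
        conv_lhs => rw [show S.α p = (1:ℝ) • S.α p + (0:ℝ) • S.α q by module]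
        rw [splane_snd S hB, splane_fst S hA]
        match_scalars <;> norm_num
      · refine ⟨(2, 1), by norm_num, by norm_num, ?_⟩
        rw [show (altW q p 3).reverse = ([q, p, q] : List (Fin n)) from rfl]
        simp only [wordProd_cons_apply, wordProd_nil_apply]
        conv_lhs => rw [show S.α p = (1:ℝ) • S.α p + (0:ℝ) • S.α q by module]
        rw [splane_snd S hB, splane_fst S hA, splane_snd S hB]
        match_scalars <;> norm_num
      · refine ⟨(1, 1), by norm_num, by norm_num, ?_⟩
        rw [show (altW q p 4).reverse = ([p, q, p, q] : List (Fin n)) from rfl]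
        simp only [wordProd_cons_apply, wordProd_nil_apply]
        conv_lhs => rw [show S.α p = (1:ℝ) • S.α p + (0:ℝ) • S.α q by module]
        rw [splane_snd S hB, splane_fst S hA, splane_snd S hB, splane_fst S hA]
        match_scalars <;> norm_num
      · refine ⟨(1, 0), by norm_num, by norm_num, ?_⟩
        rw [show (altW q p 5).reverse = ([q, p, q, p, q] : List (Fin n)) from rfl]
        simp only [wordProd_cons_apply, wordProd_nil_apply]
        conv_lhs => rw [show S.α p = (1:ℝ) • S.α p + (0:ℝ) • S.α q by module]
        rw [splane_snd S hB, splane_fst S hA, splane_snd S hB, splane_fst S hA, splane_snd S hB]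
        match_scalars <;> norm_num

end RootData

theorem lie_mul_apply (f g : E ≃ₗᵢ[ℝ] E) (x : E) : (f * g) x = f (g x) := rfl

theorem lie_one_apply (x : E) : (1 : E ≃ₗᵢ[ℝ] E) x = x := rfl

namespace RootData

variable {n : ℕ} (S : RootData n E)

/-- The key positivity theorem: if `ℓ(w sₖ) > ℓ(w)` then `w αₖ` is a nonnegative
combination of simple roots. -/
theorem posT : ∀ Q : ℕ, ∀ w : E ≃ₗᵢ[ℝ] E, w ∈ S.W → S.ell w ≤ Q →
    ∀ k : Fin n, S.ell w < S.ell (w * S.s k) → ∀ l, 0 ≤ S.c (w (S.α k)) l := by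
  intro Q
  induction Q with
  | zero =>
    intro w hw hQ k _ l
    have hw1 : w = 1 := S.eq_one_of_ell_eq_zero hw (Nat.le_zero.mp hQ)
    subst hw1
    rw [lie_one_apply, c_alpha]
    split <;> norm_num
  | succ Q IH =>
    intro w hw hQ k hk l
    by_cases hq0 : S.ell w = 0
    · have hw1 : w = 1 := S.eq_one_of_ell_eq_zero hw hq0
      subst hw1
      rw [lie_one_apply, c_alpha]
      split <;> norm_num
    -- find the last letter of a reduced word for w
    obtain ⟨lw, hlen, hprodw⟩ := S.ell_spec hw
    rcases lw.eq_nil_or_concat with rfl | ⟨lw', j, rfl⟩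
    · simp at hlen; omega
    rw [List.concat_eq_append] at hlen hprodw
    have hw' : S.wordProd lw' = w * S.s j := by
      have h1 : S.wordProd (lw' ++ [j]) = S.wordProd lw' * S.s j := by
        rw [wordProd_append, wordProd_singleton]
      rw [h1] at hprodw
      rw [← hprodw, mul_assoc, s_mul_s, mul_one]
    have hdesc : S.ell (w * S.s j) + 1 = S.ell w := by
      have h2 : S.ell (w * S.s j) ≤ lw'.length := S.ell_le hw'
      have h3 : lw'.length + 1 = S.ell w := by
        rw [← hlen]; simp
      have h4 := S.ell_le_mul_s hw j
      have h5 := S.ell_mul_s_ne hw j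
      omega
    have hkj : k ≠ j := by
      intro h
      subst h
      omega
    obtain ⟨m, hm2, hbraid, hposv⟩ := S.dihedral k j hkj
    -- the braid contradiction at step m
    have contra : S.ell (w * S.wordProd (altW j k m)) + m = S.ell w → False := by
      intro hinvm
      have hmk : altW k j m = k :: altW j k (m-1) := by
        have hmm : m = (m-1) + 1 := by omega
        rw [hmm]
        rfl
      have heq : w * S.wordProd (altW j k m) =
          (w * S.s k) * S.wordProd (altW j k (m-1)) := by
        rw [hbraid, hmk, wordProd_cons, ← mul_assoc]
      have hle : S.ell (w * S.s k) ≤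
          S.ell ((w * S.s k) * S.wordProd (altW j k (m-1))) + (m-1) := by
        have := S.ell_le_mul_word (S.W.mul_mem hw (S.s_mem_W k)) (altW j k (m-1))
        simpa using this
      rw [← heq] at hle
      omega
    -- the walk within the coset
    have walk : ∀ d t : ℕ, m - (t+1) ≤ d → t + 1 ≤ m →
        S.ell (w * S.wordProd (altW j k (t+1))) + (t+1) = S.ell w →
        S.ell (w * S.wordProd (altW j k t)) + t = S.ell w →
        ∀ l, 0 ≤ S.c (w (S.α k)) l := by
      intro d
      induction d with
      | zero =>
        intro t hmt htm1 hinv1 hinv0 l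
        exfalso
        have htm : t + 1 = m := by omega
        rw [htm] at hinv1
        exact contra hinv1
      | succ d IHd =>
        intro t hmt htm1 hinv1 hinv0 l
        have htm : t + 1 < m := by
          rcases Nat.lt_or_ge (t+1) m with h | h
          · exact h
          · exfalso
            have htm' : t + 1 = m := by omega
            rw [htm'] at hinv1
            exact contra hinv1
        set z := w * S.wordProd (altW j k (t+1)) with hz
        have hzW : z ∈ S.W := S.W.mul_mem hw (S.wordProd_mem_W _)
        have hnext : altW j k (t+2) = altW j k (t+1) ++ [if (t+1) % 2 = 0 then j else k] :=
          altW_append j k (t+1)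
        set a := if (t+1) % 2 = 0 then j else k with ha
        have hzs : w * S.wordProd (altW j k (t+2)) = z * S.s a := by
          rw [hnext, wordProd_append, wordProd_singleton, ← mul_assoc]
        by_cases hstop : S.ell z < S.ell (z * S.s a)
        · -- stopping: both ascents at z
          have hprev : altW j k (t+1) = altW j k t ++ [if t % 2 = 0 then j else k] :=
            altW_append j k t
          set b := if t % 2 = 0 then j else k with hb
          have hzb : z * S.s b = w * S.wordProd (altW j k t) := by
            rw [hz, hprev, wordProd_append, wordProd_singleton, mul_assoc, mul_assoc,
              s_mul_s, mul_one]
          have hascb : S.ell z < S.ell (z * S.s b) := by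
            rw [hzb]; omega
          have hab : (a = j ∧ b = k) ∨ (a = k ∧ b = j) := by
            by_cases hpar : t % 2 = 0
            · right
              constructor
              · rw [ha, if_neg (by omega)]
              · rw [hb, if_pos hpar]
            · left
              constructor
              · rw [ha, if_pos (by omega)]
              · rw [hb, if_neg hpar]
          have hasck : S.ell z < S.ell (z * S.s k) := by
            rcases hab with ⟨ha', hb'⟩ | ⟨ha', hb'⟩
            · rw [← hb']; exact hascb
            · rw [← ha']; exact hstop
          have hascj : S.ell z < S.ell (z * S.s j) := by
            rcases hab with ⟨ha', hb'⟩ | ⟨ha', hb'⟩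
            · rw [← ha']; exact hstop
            · rw [← hb']; exact hascb
          have hzQ : S.ell z ≤ Q := by omega
          have hconek := IH z hzW hzQ k hasck
          have hconej := IH z hzW hzQ j hascj
          obtain ⟨cf, hcf1, hcf2, hcfeq⟩ := hposv (t+1) htm
          rw [wordProd_reverse] at hcfeq
          have hwz : z ((S.wordProd (altW j k (t+1)))⁻¹ (S.α k)) = w (S.α k) := by
            rw [← lie_mul_apply, hz, mul_assoc, mul_inv_cancel, mul_one]
          rw [← hwz, hcfeq, map_add, map_smul, map_smul, c_add, c_smul, c_smul]
          have hm1 := mul_nonneg hcf1 (hconek l)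
          have hm2' := mul_nonneg hcf2 (hconej l)
          linarith
        · -- continue the walk
          have hne := S.ell_mul_s_ne hzW a
          have hlt : S.ell (z * S.s a) < S.ell z := by omega
          have hge := S.ell_le_mul_s hzW a
          have hinv2 : S.ell (w * S.wordProd (altW j k (t+2))) + (t+2) = S.ell w := by
            rw [hzs]
            omega
          exact IHd (t+1) (by omega) (by omega) hinv2 hinv1 l
    -- start the walk at t = 0
    have hinv1 : S.ell (w * S.wordProd (altW j k 1)) + 1 = S.ell w := by
      have h1 : altW j k 1 = [j] := rfl
      rw [h1, wordProd_singleton]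
      exact hdesc
    have hinv0 : S.ell (w * S.wordProd (altW j k 0)) + 0 = S.ell w := by
      have h0 : altW j k 0 = [] := rfl
      rw [h0, wordProd_nil, mul_one]
      omega
    exact walk m 0 (by omega) (by omega) hinv1 hinv0 l

/-- If `ℓ(w sₖ) < ℓ(w)` then `w αₖ` is a nonpositive combination of simple roots. -/
theorem negT {w : E ≃ₗᵢ[ℝ] E} (hw : w ∈ S.W) (k : Fin n)
    (hdesc : S.ell (w * S.s k) < S.ell w) : ∀ l, S.c (w (S.α k)) l ≤ 0 := by
  intro l
  have hw' : w * S.s k ∈ S.W := S.W.mul_mem hw (S.s_mem_W k)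
  have hasc : S.ell (w * S.s k) < S.ell ((w * S.s k) * S.s k) := by
    rw [mul_assoc, s_mul_s, mul_one]
    exact hdesc
  have hpos := S.posT (S.ell (w * S.s k)) (w * S.s k) hw' (le_refl _) k hasc l
  have heq : (w * S.s k) (S.α k) = -(w (S.α k)) := by
    rw [lie_mul_apply, s_self, map_neg]
  rw [heq] at hpos
  have : S.c (-(w (S.α k))) l = -(S.c (w (S.α k)) l) := by
    have h2 : (-(w (S.α k))) = (0 : E) - w (S.α k) := by abel
    rw [h2, c_sub, c_zero]
    ring
  rw [this] at hpos
  linarith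

/-- Uniqueness of the dominant representative in an orbit. -/
theorem dominant_orbit_eq (x : E) (hdomx : S.Dominant x) :
    ∀ Q : ℕ, ∀ w : E ≃ₗᵢ[ℝ] E, w ∈ S.W → S.ell w ≤ Q → S.Dominant (w x) → w x = x := by
  intro Q
  induction Q with
  | zero =>
    intro w hw hQ _
    have hw1 : w = 1 := S.eq_one_of_ell_eq_zero hw (Nat.le_zero.mp hQ)
    subst hw1
    rfl
  | succ Q IH =>
    intro w hw hQ hdw
    by_cases hq0 : S.ell w = 0
    · have hw1 : w = 1 := S.eq_one_of_ell_eq_zero hw hq0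
      subst hw1
      rfl
    obtain ⟨lw, hlen, hprodw⟩ := S.ell_spec hw
    rcases lw.eq_nil_or_concat with rfl | ⟨lw', j, rfl⟩
    · simp at hlen; omega
    rw [List.concat_eq_append] at hlen hprodw
    have hw' : S.wordProd lw' = w * S.s j := by
      have h1 : S.wordProd (lw' ++ [j]) = S.wordProd lw' * S.s j := by
        rw [wordProd_append, wordProd_singleton]
      rw [h1] at hprodw
      rw [← hprodw, mul_assoc, s_mul_s, mul_one]
    have hdesc : S.ell (w * S.s j) + 1 = S.ell w := by
      have h2 : S.ell (w * S.s j) ≤ lw'.length := S.ell_le hw'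
      have h3 : lw'.length + 1 = S.ell w := by rw [← hlen]; simp
      have h4 := S.ell_le_mul_s hw j
      have h5 := S.ell_mul_s_ne hw j
      omega
    have hneg := S.negT hw j (by omega)
    -- ⟪w x, w α_j⟫ = ⟪x, α_j⟫ ≥ 0 but also ≤ 0
    have hip : ⟪w x, w (S.α j)⟫ = ⟪x, S.α j⟫ := LinearIsometryEquiv.inner_map_map w x (S.α j)
    have h1 : 0 ≤ ⟪x, S.α j⟫ := hdomx j
    have h2 : ⟪w x, w (S.α j)⟫ ≤ 0 := by
      conv_lhs => rw [← S.sum_c (w (S.α j))]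
      rw [inner_sum]
      apply Finset.sum_nonpos
      intro l _
      rw [real_inner_smul_right]
      exact mul_nonpos_of_nonpos_of_nonneg (hneg l) (hdw l)
    have h3 : ⟪x, S.α j⟫ = 0 := le_antisymm (hip ▸ h2) h1
    have h4 : S.s j x = x := by
      apply S.s_apply_of_inner_eq_zero
      rw [real_inner_comm]
      exact h3
    have h5 : (w * S.s j) x = w x := by
      rw [lie_mul_apply, h4]
    have h6 := IH (w * S.s j) (S.W.mul_mem hw (S.s_mem_W j)) (by omega) (by rw [h5]; exact hdw)
    rw [← h5, h6]

end RootData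

namespace RootData

variable {n : ℕ} (S : RootData n E)

theorem exists_sum_bound (m : Fin n → ℕ) :
    ∃ C : ℝ, ∀ y ∈ S.orbit (S.lam m), (∑ k, S.c y k) ≤ C := by
  refine ⟨‖LinearMap.toContinuousLinearMap (S.b.sumCoords)‖ * ‖S.lam m‖, ?_⟩
  intro y hy
  have h1 : (∑ k, S.c y k) = S.b.sumCoords y := by
    rw [Module.Basis.coe_sumCoords_of_fintype]
    simp only [LinearMap.coe_sum, Finset.sum_apply]
    exact Finset.sum_congr rfl fun k _ => (S.c_eq_coord y k)
  have h2 : S.b.sumCoords y = LinearMap.toContinuousLinearMap (S.b.sumCoords) y := by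
    rw [LinearMap.coe_toContinuousLinearMap']
  rw [h1, h2]
  calc LinearMap.toContinuousLinearMap (S.b.sumCoords) y
      ≤ ‖LinearMap.toContinuousLinearMap (S.b.sumCoords) y‖ := le_abs_self _
    _ ≤ ‖LinearMap.toContinuousLinearMap (S.b.sumCoords)‖ * ‖y‖ :=
        ContinuousLinearMap.le_opNorm _ y
    _ = ‖LinearMap.toContinuousLinearMap (S.b.sumCoords)‖ * ‖S.lam m‖ := by
        rw [S.norm_of_mem_orbit hy]

theorem ascent_step (m : Fin n → ℕ) (x : E) (hx : x ∈ S.orbit (S.lam m))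
    (hnd : ¬ S.Dominant x) :
    ∃ x' ∈ S.orbit (S.lam m), (∑ k, S.c x k) + 1 ≤ (∑ k, S.c x' k) ∧
      ∀ k, S.c x k ≤ S.c x' k := by
  simp only [Dominant, not_forall, not_le] at hnd
  obtain ⟨l, hl⟩ := hnd
  obtain ⟨t, ht, htv⟩ := S.s_apply_lat (S.isLat_of_mem_orbit hx) l
  have hNl := S.inner_self_pos l
  have htneg : (t:ℝ) ≤ -1 := by
    have h1 : (t:ℝ) * ⟪S.α l, S.α l⟫ < 0 := by rw [htv]; linarith
    have h2 : (t:ℝ) < 0 := by nlinarith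
    have h3 : t < 0 := by exact_mod_cast h2
    have h4 : t ≤ -1 := by omega
    exact_mod_cast h4
  refine ⟨S.s l x, S.smul_mem_orbit (S.s_mem_W l) hx, ?_, ?_⟩
  · have hsum : ∑ k, S.c (S.s l x) k = (∑ k, S.c x k) - (t:ℝ) := by
      rw [ht]
      rw [Finset.sum_congr rfl (fun k _ => by rw [c_sub, c_smul, c_alpha])]
      rw [Finset.sum_sub_distrib]
      congr 1
      rw [Finset.sum_congr rfl (fun k _ => by rw [mul_ite, mul_one, mul_zero])]
      rw [Finset.sum_ite_eq Finset.univ l fun _ => (t:ℝ)]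
      simp
    rw [hsum]
    linarith
  · intro k
    rw [ht, c_sub, c_smul, c_alpha]
    by_cases hlk : l = k
    · subst hlk
      rw [if_pos rfl, mul_one]
      linarith
    · simp [hlk]

theorem exists_dominant_above (m : Fin n → ℕ) :
    ∀ x ∈ S.orbit (S.lam m),
      ∃ z ∈ S.orbit (S.lam m), S.Dominant z ∧ ∀ k, S.c x k ≤ S.c z k := by
  obtain ⟨C, hC⟩ := S.exists_sum_bound m
  have aux : ∀ N : ℕ, ∀ x, x ∈ S.orbit (S.lam m) → C - (∑ k, S.c x k) ≤ N →
      ∃ z ∈ S.orbit (S.lam m), S.Dominant z ∧ ∀ k, S.c x k ≤ S.c z k := by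
    intro N
    induction N with
    | zero =>
      intro x hx hN
      by_cases hdomx : S.Dominant x
      · exact ⟨x, hx, hdomx, fun k => le_refl _⟩
      · exfalso
        obtain ⟨x', hx', hsum, _⟩ := S.ascent_step m x hx hdomx
        have := hC x' hx'
        simp only [Nat.cast_zero] at hN
        linarith
    | succ N IHN =>
      intro x hx hN
      by_cases hdomx : S.Dominant x
      · exact ⟨x, hx, hdomx, fun k => le_refl _⟩
      · obtain ⟨x', hx', hsum, hcoords⟩ := S.ascent_step m x hx hdomx
        obtain ⟨z, hz, hdz, hcz⟩ := IHN x' hx' (by push_cast; push_cast at hN; linarith)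
        exact ⟨z, hz, hdz, fun k => le_trans (hcoords k) (hcz k)⟩
  intro x hx
  obtain ⟨N, hN⟩ := exists_nat_ge (C - (∑ k, S.c x k))
  exact aux N x hx hN

/-- The highest-weight bound : every orbit point has coordinates at most those of `λ`. -/
theorem orbit_coord_le (m : Fin n → ℕ) (hdom : S.Dominant (S.lam m)) :
    ∀ x ∈ S.orbit (S.lam m), ∀ k, S.c x k ≤ m k := by
  intro x hx k
  obtain ⟨z, hz, hdz, hcz⟩ := S.exists_dominant_above m x hx
  obtain ⟨w, hw, rfl⟩ := hz
  have heq : w (S.lam m) = S.lam m :=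
    S.dominant_orbit_eq (S.lam m) hdom (S.ell w) w hw (le_refl _) hdz
  have h2 : S.c x k ≤ S.c (w (S.lam m)) k := hcz k
  rw [heq] at h2
  calc S.c x k ≤ S.c (S.lam m) k := h2
    _ = m k := S.c_lam m k

/-- The highest-weight bound extends to the weight polytope. -/
theorem poly_coord_le (m : Fin n → ℕ) (hdom : S.Dominant (S.lam m)) :
    ∀ x ∈ S.poly m, ∀ k, S.c x k ≤ m k := by
  intro x hx k
  have hsub : S.poly m ⊆ {y | S.c y k ≤ m k} := by
    apply convexHull_min
    · intro y hy
      exact S.orbit_coord_le m hdom y hy k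
    · have : {y : E | S.c y k ≤ (m k : ℝ)} = {y | S.b.coord k y ≤ (m k : ℝ)} := by
        ext y; rw [Set.mem_setOf_eq, Set.mem_setOf_eq, c_eq_coord]
      rw [this]
      exact convex_halfSpace_le (S.b.coord k).isLinear _
  exact hsub hx

end RootData

namespace RootData

variable {n : ℕ} (S : RootData n E)

theorem c_combo (f : Fin n → ℝ) (k : Fin n) : S.c (∑ l, f l • S.α l) k = f k := by
  rw [c_sum_finset]
  rw [Finset.sum_congr rfl (fun l _ => by rw [c_smul, c_alpha, mul_ite, mul_one, mul_zero])]
  rw [Finset.sum_ite_eq' Finset.univ k f]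
  simp

theorem c_combo_finset (K : Finset (Fin n)) (f : Fin n → ℝ) (k : Fin n) :
    S.c (∑ l ∈ K, f l • S.α l) k = if k ∈ K then f k else 0 := by
  rw [c_sum_finset]
  rw [Finset.sum_congr rfl (fun l _ => by rw [c_smul, c_alpha, mul_ite, mul_one, mul_zero])]
  rw [Finset.sum_ite_eq' K k f]

theorem finrank_ker_coord (k : Fin n) :
    Module.finrank ℝ (LinearMap.ker (S.b.coord k)) = n - 1 := by
  have h1 := LinearMap.finrank_range_add_finrank_ker (S.b.coord k)
  have h2 : LinearMap.range (S.b.coord k) = ⊤ := by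
    rw [LinearMap.range_eq_top]
    intro y
    exact ⟨y • S.b k, by simp⟩
  rw [h2] at h1
  rw [finrank_top] at h1
  have h3 : Module.finrank ℝ E = n := by
    rw [Module.finrank_eq_card_basis S.b, Fintype.card_fin]
  have h4 : Module.finrank ℝ ℝ = 1 := Module.finrank_self ℝ
  omega

theorem finrank_ker_coord_two {k k' : Fin n} (hkk : k ≠ k') :
    Module.finrank ℝ (LinearMap.ker ((S.b.coord k).prod (S.b.coord k'))) = n - 2 := by
  set φ := (S.b.coord k).prod (S.b.coord k') with hφ
  have h1 := LinearMap.finrank_range_add_finrank_ker φ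
  have h2 : LinearMap.range φ = ⊤ := by
    rw [LinearMap.range_eq_top]
    intro y
    refine ⟨y.1 • S.b k + y.2 • S.b k', ?_⟩
    have e1 : φ (S.b k) = (1, 0) := by
      simp only [hφ, LinearMap.prod_apply, Function.prod, Module.Basis.coord_apply, Module.Basis.repr_self]
      rw [Finsupp.single_apply, Finsupp.single_apply, if_pos rfl, if_neg hkk]
    have e2 : φ (S.b k') = (0, 1) := by
      simp only [hφ, LinearMap.prod_apply, Function.prod, Module.Basis.coord_apply, Module.Basis.repr_self]
      rw [Finsupp.single_apply, Finsupp.single_apply, if_pos rfl, if_neg (Ne.symm hkk)]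
    rw [map_add, map_smul, map_smul, e1, e2]
    ext <;> simp
  rw [h2, finrank_top] at h1
  have h3 : Module.finrank ℝ E = n := by
    rw [Module.finrank_eq_card_basis S.b, Fintype.card_fin]
  have h4 : Module.finrank ℝ (ℝ × ℝ) = 2 := by
    rw [Module.finrank_prod, Module.finrank_self]
  omega

/-- The coordinate faces are stable under the simple reflections fixing the coordinate. -/
theorem F_smul {m : Fin n → ℕ} {i : Fin n} {l : Fin n} (hli : l ≠ i) {x : E}
    (hx : x ∈ S.F_ m {i}) : S.s l x ∈ S.F_ m {i} := by
  obtain ⟨hx1, hx2⟩ := hx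
  refine ⟨S.smul_mem_poly (S.s_mem_W l) hx1, ?_⟩
  intro i' hi'
  rw [Set.mem_singleton_iff] at hi'
  subst hi'
  rw [S.s_apply, c_sub, c_smul, c_alpha, if_neg hli, mul_zero, sub_zero]
  exact hx2 _ rfl

/-- The span of differences of a coordinate face is stable under the other reflections. -/
theorem diffspan_smul (m : Fin n → ℕ) (i : Fin n) (l : Fin n) (hli : l ≠ i) :
    ∀ v ∈ Submodule.span ℝ {x : E | ∃ μ ∈ S.F_ m {i}, ∃ ν ∈ S.F_ m {i}, x = μ - ν},
      S.s l v ∈ Submodule.span ℝ {x : E | ∃ μ ∈ S.F_ m {i}, ∃ ν ∈ S.F_ m {i}, x = μ - ν} := by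
  intro v hv
  induction hv using Submodule.span_induction with
  | mem x hx =>
    obtain ⟨μ, hμ, ν, hν, rfl⟩ := hx
    apply Submodule.subset_span
    exact ⟨S.s l μ, S.F_smul hli hμ, S.s l ν, S.F_smul hli hν, map_sub _ _ _⟩
  | zero => rw [map_zero]; exact Submodule.zero_mem _
  | add x y _ _ hx hy => rw [map_add]; exact Submodule.add_mem _ hx hy
  | smul r x _ hx => rw [map_smul]; exact Submodule.smul_mem _ r hx

/-- Peeling off simple roots from a positive combination lying in a reflection-stable
subspace. -/
theorem peel (i : Fin n) (D : Submodule ℝ E)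
    (hDs : ∀ l : Fin n, l ≠ i → ∀ v ∈ D, S.s l v ∈ D) :
    ∀ K : Finset (Fin n), (∀ k ∈ K, k ≠ i) →
      ∀ r : Fin n → ℝ, (∀ k ∈ K, 0 < r k) → (∑ k ∈ K, r k • S.α k) ∈ D →
      ∀ k ∈ K, S.α k ∈ D := by
  intro K
  induction K using Finset.strongInductionOn with
  | _ K IHK =>
    intro hKi r hr hvD k hk
    set v := ∑ k ∈ K, r k • S.α k with hv
    have hex : ∃ l ∈ K, ⟪v, S.α l⟫ ≠ 0 := by
      by_contra hcon
      push_neg at hcon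
      have hvv : ⟪v, v⟫ = 0 := by
        conv_lhs => rw [hv]
        rw [sum_inner]
        apply Finset.sum_eq_zero
        intro l hl
        rw [real_inner_smul_left, real_inner_comm, ← hv, hcon l hl, mul_zero]
      have hv0 : v = 0 := by
        have := real_inner_self_eq_norm_sq v
        have hnv : ‖v‖ ^ 2 = 0 := by rw [← this]; exact hvv
        have : ‖v‖ = 0 := by
          nlinarith [norm_nonneg v]
        exact norm_eq_zero.mp this
      have hck : S.c v k = r k := by
        rw [hv, c_combo_finset, if_pos hk]
      rw [hv0, c_zero] at hck
      exact absurd hck.symm (ne_of_gt (hr k hk))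
    obtain ⟨l, hl, hvl⟩ := hex
    have halD : S.α l ∈ D := by
      have hslv : S.s l v ∈ D := hDs l (hKi l hl) v hvD
      have hdiff : v - S.s l v = (2 * ⟪S.α l, v⟫ / ⟪S.α l, S.α l⟫) • S.α l := by
        rw [S.s_apply]
        abel
      have hcoef : 2 * ⟪S.α l, v⟫ / ⟪S.α l, S.α l⟫ ≠ 0 := by
        apply div_ne_zero
        · rw [real_inner_comm]
          intro h
          apply hvl
          linarith [h]  -- 2 * ⟪v,α l⟫ = 0 → ⟪v, α l⟫ = 0
        · exact ne_of_gt (S.inner_self_pos l)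
      have hmem : (2 * ⟪S.α l, v⟫ / ⟪S.α l, S.α l⟫) • S.α l ∈ D := by
        rw [← hdiff]
        exact Submodule.sub_mem D hvD hslv
      have := Submodule.smul_mem D (2 * ⟪S.α l, v⟫ / ⟪S.α l, S.α l⟫)⁻¹ hmem
      rwa [smul_smul, inv_mul_cancel₀ hcoef, one_smul] at this
    by_cases hkl : k = l
    · rw [hkl]; exact halD
    · have hv' : (∑ k' ∈ K.erase l, r k' • S.α k') ∈ D := by
        have hsplit : ∑ k' ∈ K.erase l, r k' • S.α k' = v - r l • S.α l := by
          rw [hv, ← Finset.sum_erase_add K _ hl]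
          abel
        rw [hsplit]
        exact Submodule.sub_mem D hvD (Submodule.smul_mem D (r l) halD)
      exact IHK (K.erase l) (Finset.erase_ssubset hl)
        (fun k' hk' => hKi k' (Finset.mem_of_mem_erase hk'))
        r (fun k' hk' => hr k' (Finset.mem_of_mem_erase hk')) hv'
        k (Finset.mem_erase.mpr ⟨hkl, hk⟩)

end RootData

variable {n : ℕ}

/-- a coordinate face `F_i` is a facet (has dimension `n - 1`) iff
`(ηᵢ, ω̃ⱼ) ≠ mⱼ` for all `j ≠ i`, where `ηᵢ` is the least element of `P_i` and `ω̃ⱼ`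
are the fundamental coweights. -/
theorem coordinate_face_facet_criterion (S : RootData n E) (m : Fin n → ℕ)
    (hdom : S.Dominant (S.lam m)) (hint : S.IntegralDom m)
    (i : Fin n) (η : E) (hη : η ∈ S.P_ m {i}) (hleast : ∀ μ ∈ S.P_ m {i}, S.wle η μ)
    (ω : Fin n → E) (hω : ∀ j, S.IsCoweight j (ω j)) :
    Module.finrank ℝ
        (Submodule.span ℝ {x : E | ∃ μ ∈ S.F_ m {i}, ∃ ν ∈ S.F_ m {i}, x = μ - ν}) = n - 1 ↔
      ∀ j, j ≠ i → ⟪η, ω j⟫ ≠ (m j : ℝ) := by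
  classical
  set D := Submodule.span ℝ {x : E | ∃ μ ∈ S.F_ m {i}, ∃ ν ∈ S.F_ m {i}, x = μ - ν} with hD
  have hlamF : S.lam m ∈ S.F_ m {i} := by
    refine ⟨S.lam_mem_poly m, ?_⟩
    intro i' hi'
    rw [Set.mem_singleton_iff] at hi'
    subst hi'
    exact S.c_lam m _
  have hηF : η ∈ S.F_ m {i} := ⟨hη.1.1, hη.2⟩
  have hlamP : S.lam m ∈ S.P_ m {i} := by
    refine ⟨⟨S.lam_mem_poly m, S.isLat_lam m⟩, ?_⟩
    intro i' hi'
    rw [Set.mem_singleton_iff] at hi'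
    subst hi'
    exact S.c_lam m _
  obtain ⟨a, ha⟩ := hleast (S.lam m) hlamP
  have hak : ∀ k, (a k : ℝ) = m k - S.c η k := by
    intro k
    have h1 := congrArg (fun y => S.c y k) ha
    rw [S.c_sub, S.c_lam, S.c_combo (fun l => (a l : ℝ)) k] at h1
    linarith [h1]
  have hcoord : ∀ j, ⟪η, ω j⟫ = S.c η j := by
    intro j
    rw [real_inner_comm]
    exact S.coweight_inner j (ω j) (hω j) η
  have hDker : D ≤ LinearMap.ker (S.b.coord i) := by
    rw [hD, Submodule.span_le]
    rintro x ⟨μ, hμ, ν, hν, rfl⟩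
    rw [SetLike.mem_coe, LinearMap.mem_ker, ← S.c_eq_coord, S.c_sub,
      hμ.2 i rfl, hν.2 i rfl, sub_self]
  constructor
  · -- (⇒) facet implies all coefficients differ
    intro hrank j hji
    rw [hcoord j]
    intro hcj
    have h2n : 2 ≤ n := by
      have h1 : (j : ℕ) ≠ (i : ℕ) := fun h => hji (Fin.ext h)
      have := j.isLt
      have := i.isLt
      omega
    -- every element of the face has `j`-th coordinate `m j`
    have hconst : ∀ x ∈ S.F_ m {i}, S.c x j = m j := by
      rintro x ⟨hx1, hx2⟩
      have hxi : S.c x i = m i := hx2 i rfl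
      rw [RootData.poly, convexHull_eq] at hx1
      obtain ⟨ι, t, wt, z, hw0, hw1, hzs, hx⟩ := hx1
      have hcm : x = ∑ b ∈ t, wt b • z b := by
        rw [← hx, Finset.centerMass_eq_of_sum_1 _ _ hw1]
      have hcx : ∀ k, S.c x k = ∑ b ∈ t, wt b * S.c (z b) k := by
        intro k
        rw [hcm, S.c_sum_finset]
        exact Finset.sum_congr rfl fun b _ => by rw [S.c_smul]
      have hzle : ∀ b ∈ t, ∀ k, S.c (z b) k ≤ m k := fun b hb k =>
        S.orbit_coord_le m hdom (z b) (hzs b hb) k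
      have hverti : ∀ b ∈ t, wt b * ((m i : ℝ) - S.c (z b) i) = 0 := by
        apply (Finset.sum_eq_zero_iff_of_nonneg ?_).mp
        · have hsum : ∑ b ∈ t, wt b * ((m i : ℝ) - S.c (z b) i)
              = (∑ b ∈ t, wt b) * (m i : ℝ) - S.c x i := by
            rw [hcx i, Finset.sum_mul, ← Finset.sum_sub_distrib]
            exact Finset.sum_congr rfl fun b _ => by ring
          rw [hsum, hw1, hxi]
          ring
        · intro b hb
          exact mul_nonneg (hw0 b hb) (by linarith [hzle b hb i])
      have hvertj : ∀ b ∈ t, wt b * S.c (z b) j = wt b * m j := by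
        intro b hb
        rcases eq_or_lt_of_le (hw0 b hb) with h0 | hpos
        · rw [← h0, zero_mul, zero_mul]
        · have hzi : S.c (z b) i = m i := by
            have := hverti b hb
            have h2 : (m i : ℝ) - S.c (z b) i = 0 := by
              rcases mul_eq_zero.mp this with h | h
              · exact absurd h.symm (ne_of_lt hpos)
              · exact h
            linarith
          have hzP : z b ∈ S.P_ m {i} := by
            refine ⟨⟨S.orbit_subset_poly m (hzs b hb), S.isLat_of_mem_orbit (hzs b hb)⟩, ?_⟩
            intro i' hi'
            rw [Set.mem_singleton_iff] at hi'
            subst hi'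
            exact hzi
          obtain ⟨u, hu⟩ := hleast (z b) hzP
          have h3 := congrArg (fun y => S.c y j) hu
          rw [S.c_sub, S.c_combo (fun l => (u l : ℝ)) j] at h3
          have h4 : S.c η j ≤ S.c (z b) j := by
            have : (0:ℝ) ≤ (u j : ℝ) := Nat.cast_nonneg _
            linarith
          have h5 : S.c (z b) j = m j := le_antisymm (hzle b hb j) (by rw [← hcj]; exact h4)
          rw [h5]
      rw [hcx j]
      rw [Finset.sum_congr rfl hvertj, ← Finset.sum_mul, hw1, one_mul]
    -- now D lies in an (n-2)-dimensional subspace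
    have hDker2 : D ≤ LinearMap.ker ((S.b.coord i).prod (S.b.coord j)) := by
      rw [hD, Submodule.span_le]
      rintro x ⟨μ, hμ, ν, hν, rfl⟩
      rw [SetLike.mem_coe, LinearMap.mem_ker]
      have e1 : S.b.coord i (μ - ν) = 0 := by
        rw [← S.c_eq_coord, S.c_sub, hμ.2 i rfl, hν.2 i rfl, sub_self]
      have e2 : S.b.coord j (μ - ν) = 0 := by
        rw [← S.c_eq_coord, S.c_sub, hconst μ hμ, hconst ν hν, sub_self]
      rw [LinearMap.prod_apply]
      simp [Pi.prod, e1, e2]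
    have hle2 := Submodule.finrank_mono hDker2
    rw [S.finrank_ker_coord_two (Ne.symm hji)] at hle2
    rw [hrank] at hle2
    omega
  · -- (⇐) all coefficients differ implies facet
    intro hcoef
    apply le_antisymm
    · have hle1 := Submodule.finrank_mono hDker
      rwa [S.finrank_ker_coord i] at hle1
    · -- construct n-1 independent vectors in D
      set K : Finset (Fin n) := Finset.univ.erase i with hK
      have hKne : ∀ k ∈ K, k ≠ i := fun k hk => (Finset.mem_erase.mp hk).1
      have hapos : ∀ k ∈ K, 0 < ((a k : ℝ)) := by
        intro k hk
        have h1 : S.c η k ≠ m k := by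
          rw [← hcoord k]
          exact hcoef k (hKne k hk)
        have h2 : (a k : ℝ) ≠ 0 := by
          rw [hak k]
          intro h
          exact h1 (by linarith)
        have h3 : (0:ℝ) ≤ (a k : ℝ) := Nat.cast_nonneg _
        exact lt_of_le_of_ne h3 (Ne.symm h2)
      have hvD : (∑ k ∈ K, (a k : ℝ) • S.α k) ∈ D := by
        have hai : (a i : ℝ) = 0 := by
          rw [hak i, hη.2 i rfl]
          ring
        have hsplit : ∑ k ∈ K, (a k : ℝ) • S.α k = S.lam m - η := by
          rw [ha]
          rw [← Finset.sum_erase_add Finset.univ _ (Finset.mem_univ i), hai]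
          rw [zero_smul, add_zero]
        rw [hsplit]
        exact Submodule.subset_span ⟨S.lam m, hlamF, η, hηF, rfl⟩
      have halls : ∀ k ∈ K, S.α k ∈ D :=
        S.peel i D (fun l hl v hv => S.diffspan_smul m i l hl v hv) K hKne
          (fun k => (a k : ℝ)) hapos hvD
      -- the `α k`, `k ≠ i`, are linearly independent
      have hli : LinearIndependent ℝ (fun k : {k : Fin n // k ≠ i} => S.α k.1) := by
        have h1 : LinearIndependent ℝ (fun k : {k : Fin n // k ≠ i} => S.b k.1) :=
          S.b.linearIndependent.comp Subtype.val Subtype.val_injective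
        have h2 : (fun k : {k : Fin n // k ≠ i} => S.b k.1)
            = fun k : {k : Fin n // k ≠ i} => S.α k.1 := funext fun k => S.hb k.1
        rwa [h2] at h1
      have hsub : Submodule.span ℝ (Set.range (fun k : {k : Fin n // k ≠ i} => S.α k.1)) ≤ D := by
        rw [Submodule.span_le]
        rintro x ⟨k, rfl⟩
        exact halls k.1 (Finset.mem_erase.mpr ⟨k.2, Finset.mem_univ _⟩)
      have hcard : Fintype.card {k : Fin n // k ≠ i} = n - 1 := by
        have h1 : Fintype.card {k : Fin n // k = i} = 1 := Fintype.card_subtype_eq i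
        have h2 := Fintype.card_subtype_compl (fun k : Fin n => k = i)
        rw [h1, Fintype.card_fin] at h2
        exact h2
      have hrk : Module.finrank ℝ
          (Submodule.span ℝ (Set.range (fun k : {k : Fin n // k ≠ i} => S.α k.1))) = n - 1 := by
        rw [finrank_span_eq_card hli, hcard]
      calc n - 1 = _ := hrk.symm
        _ ≤ Module.finrank ℝ D := Submodule.finrank_mono hsub
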